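/- Let (n_i), (k^E_i), (k^F_i) (i ≥ 1) be sequences of positive integers. Set Q^E_i := ∏_{l=1}^{i}(n_l + k^E_l) and Q^F_i := ∏_{l=1}^{i}(n_l + k^F_l), and let t^E_i := lim_{j→∞} ∏_{l=i}^{i+j} n_l/(n_l + k^E_l) and t^F_i := lim_{j→∞} ∏_{l=i}^{i+j} n_l/(n_l + k^F_l) (these limits exist since the partial products are nonincreasing in j). Assume: (i) lim_{i→∞} t^E_i = 1 and lim_{i→∞} t^F_i = 1; (ii) for every i there is j with Q^E_i dividing Q^F_j, and for every i there is j with Q^F_i dividing Q^E_j; (iii) lim_{i→∞} Q^E_i / Q^F_i = 1. Then for every δ > 0 and every N ∈ ℕ: there exist i_1 > i_1' ≥ N such that 1 − t^E_{i_1'} < δ, Q^E_{i_1'−1} divides Q^F_{i_1−1}, and (Q^F_{i_1'−1}/Q^E_{i_1'−1}) · (∏_{l=i_1'}^{i_1−1}(n_l + k^F_l) / ∏_{l=i_1'}^{i_1−1} n_l) > 1; and there exist i_2 > i_2' ≥ N such that 1 − t^F_{i_2'} < δ, Q^F_{i_2'−1} divides Q^E_{i_2−1}, and (Q^E_{i_2'−1}/Q^F_{i_2'−1})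 · (∏_{l=i_2'}^{i_2−1}(n_l + k^E_l) / ∏_{l=i_2'}^{i_2−1} n_l) > 1. -/

import Mathlib

open Filter Finset

/-- Positivity and strict upper bound for the tail-product limits. -/
private lemma vsc_tpos (n k : ℕ → ℕ) (hn : ∀ i, 1 ≤ i → 0 < n i) (hk : ∀ i, 1 ≤ i → 0 < k i)
    (t : ℕ → ℝ)
    (ht : ∀ i, Tendsto (fun j => ∏ l ∈ Finset.Icc i (i + j), (n l : ℝ) / ((n l : ℝ) + k l))
      atTop (nhds (t i)))
    (ht1 : Tendsto t atTop (nhds 1)) :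
    ∀ i, 1 ≤ i → 0 < t i ∧ t i < 1 := by
  have hfpos : ∀ l, 1 ≤ l → 0 < (n l : ℝ) / ((n l : ℝ) + k l) := by
    intro l hl
    have h1 : (0:ℝ) < n l := by exact_mod_cast hn l hl
    have h2 : (0:ℝ) < k l := by exact_mod_cast hk l hl
    positivity
  have hflt : ∀ l, 1 ≤ l → (n l : ℝ) / ((n l : ℝ) + k l) < 1 := by
    intro l hl
    have h1 : (0:ℝ) < n l := by exact_mod_cast hn l hl
    have h2 : (0:ℝ) < k l := by exact_mod_cast hk l hl
    rw [div_lt_one (by linarith)]; linarith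
  intro i hi
  constructor
  · obtain ⟨m, hm, hmi⟩ : ∃ m, (1:ℝ)/2 < t m ∧ i ≤ m :=
      ((ht1.eventually (eventually_gt_nhds (by norm_num : (1:ℝ)/2 < 1))).and
        (eventually_ge_atTop i)).exists
    have hsplit : ∀ j : ℕ, (∏ l ∈ Finset.Ico i m, (n l:ℝ)/((n l:ℝ)+k l)) *
        ∏ l ∈ Finset.Icc m (m + j), (n l:ℝ)/((n l:ℝ)+k l)
        = ∏ l ∈ Finset.Icc i (m + j), (n l:ℝ)/((n l:ℝ)+k l) := by
      intro j
      rw [← Finset.Ico_add_one_right_eq_Icc m, ← Finset.Ico_add_one_right_eq_Icc i,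
        Finset.prod_Ico_consecutive _ hmi (by omega)]
    have h1 : Tendsto (fun j => ∏ l ∈ Finset.Icc i (m + j), (n l:ℝ)/((n l:ℝ)+k l))
        atTop (nhds (t i)) := by
      have h := (ht i).comp (tendsto_add_atTop_nat (m - i))
      have key : ∀ j : ℕ, i + (j + (m - i)) = m + j := fun j => by omega
      simpa only [Function.comp_def, key] using h
    have h2 : Tendsto (fun j => (∏ l ∈ Finset.Ico i m, (n l:ℝ)/((n l:ℝ)+k l)) *
        ∏ l ∈ Finset.Icc m (m + j), (n l:ℝ)/((n l:ℝ)+k l)) atTop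
        (nhds ((∏ l ∈ Finset.Ico i m, (n l:ℝ)/((n l:ℝ)+k l)) * t m)) :=
      (ht m).const_mul _
    have heq := tendsto_nhds_unique h1 (by simpa only [hsplit] using h2)
    have hCpos : 0 < ∏ l ∈ Finset.Ico i m, (n l:ℝ)/((n l:ℝ)+k l) :=
      Finset.prod_pos fun l hl => hfpos l (le_trans hi (Finset.mem_Ico.mp hl).1)
    rw [heq]
    positivity
  · have hle : t i ≤ (n i:ℝ)/((n i:ℝ)+k i) := by
      refine le_of_tendsto (ht i) (Filter.Eventually.of_forall fun j => ?_)
      have hsplit : (∏ l ∈ Finset.Ico i (i+1), (n l:ℝ)/((n l:ℝ)+k l)) *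
          ∏ l ∈ Finset.Icc (i+1) (i + j), (n l:ℝ)/((n l:ℝ)+k l)
          = ∏ l ∈ Finset.Icc i (i + j), (n l:ℝ)/((n l:ℝ)+k l) := by
        rw [← Finset.Ico_add_one_right_eq_Icc (i+1), ← Finset.Ico_add_one_right_eq_Icc i,
          Finset.prod_Ico_consecutive _ (by omega) (by omega)]
      rw [← hsplit, Nat.Ico_succ_singleton, Finset.prod_singleton]
      have h1 : ∏ l ∈ Finset.Icc (i+1) (i + j), (n l:ℝ)/((n l:ℝ)+k l) ≤ 1 :=
        Finset.prod_le_one (fun l hl => (hfpos l (le_trans (by omega) (Finset.mem_Icc.mp hl).1)).le)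
          (fun l hl => (hflt l (le_trans (by omega) (Finset.mem_Icc.mp hl).1)).le)
      have h2 := (hfpos i hi).le
      nlinarith
    exact lt_of_le_of_lt hle (hflt i hi)

/-- The key identity `Q^E_{i-1}/Q^F_{i-1} = t^E_i / t^F_i`. -/
private lemma vsc_ratio_eq (n kE kF : ℕ → ℕ) (hn : ∀ i, 1 ≤ i → 0 < n i)
    (hkE : ∀ i, 1 ≤ i → 0 < kE i) (hkF : ∀ i, 1 ≤ i → 0 < kF i)
    (tE tF : ℕ → ℝ)
    (htE : ∀ i, Tendsto (fun j => ∏ l ∈ Finset.Icc i (i + j), (n l : ℝ) / ((n l : ℝ) + kE l))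
      atTop (nhds (tE i)))
    (htF : ∀ i, Tendsto (fun j => ∏ l ∈ Finset.Icc i (i + j), (n l : ℝ) / ((n l : ℝ) + kF l))
      atTop (nhds (tF i)))
    (hratio : Tendsto (fun i =>
        (∏ l ∈ Finset.Icc 1 i, ((n l : ℝ) + kE l)) / ∏ l ∈ Finset.Icc 1 i, ((n l : ℝ) + kF l))
      atTop (nhds 1))
    (i : ℕ) (hi : 1 ≤ i) (hFpos : 0 < tF i) :
    (∏ l ∈ Finset.Icc 1 (i-1), ((n l:ℝ) + kE l)) / (∏ l ∈ Finset.Icc 1 (i-1), ((n l:ℝ) + kF l))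
      = tE i / tF i := by
  have hnpos : ∀ l, 1 ≤ l → (0:ℝ) < n l := fun l hl => by exact_mod_cast hn l hl
  have hkEpos : ∀ l, 1 ≤ l → (0:ℝ) < kE l := fun l hl => by exact_mod_cast hkE l hl
  have hkFpos : ∀ l, 1 ≤ l → (0:ℝ) < kF l := fun l hl => by exact_mod_cast hkF l hl
  have hsplit : ∀ (g : ℕ → ℝ) (j : ℕ), ∏ l ∈ Finset.Icc 1 (i+j), g l
      = (∏ l ∈ Finset.Icc 1 (i-1), g l) * ∏ l ∈ Finset.Icc i (i+j), g l := by
    intro g j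
    have h1 : Finset.Ico 1 i = Finset.Icc 1 (i-1) := by
      rw [← Finset.Ico_add_one_right_eq_Icc]; congr 1; omega
    rw [← Finset.Ico_add_one_right_eq_Icc 1, ← Finset.prod_Ico_consecutive _ hi (by omega), h1,
      Finset.Ico_add_one_right_eq_Icc]
  -- pointwise identity
  have hpw : ∀ j : ℕ,
      ((∏ l ∈ Finset.Icc 1 (i+j), ((n l:ℝ) + kE l)) / ∏ l ∈ Finset.Icc 1 (i+j), ((n l:ℝ) + kF l))
      * ((∏ l ∈ Finset.Icc i (i+j), (n l:ℝ)/((n l:ℝ) + kE l)) /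
          ∏ l ∈ Finset.Icc i (i+j), (n l:ℝ)/((n l:ℝ) + kF l))
      = (∏ l ∈ Finset.Icc 1 (i-1), ((n l:ℝ) + kE l)) /
          (∏ l ∈ Finset.Icc 1 (i-1), ((n l:ℝ) + kF l)) := by
    intro j
    rw [hsplit (fun l => (n l:ℝ) + kE l) j, hsplit (fun l => (n l:ℝ) + kF l) j,
      Finset.prod_div_distrib, Finset.prod_div_distrib]
    have hAE : (0:ℝ) < ∏ l ∈ Finset.Icc i (i+j), ((n l:ℝ) + kE l) :=
      Finset.prod_pos fun l hl => by
        have := hnpos l (le_trans hi (Finset.mem_Icc.mp hl).1)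
        have := hkEpos l (le_trans hi (Finset.mem_Icc.mp hl).1); linarith
    have hAF : (0:ℝ) < ∏ l ∈ Finset.Icc i (i+j), ((n l:ℝ) + kF l) :=
      Finset.prod_pos fun l hl => by
        have := hnpos l (le_trans hi (Finset.mem_Icc.mp hl).1)
        have := hkFpos l (le_trans hi (Finset.mem_Icc.mp hl).1); linarith
    have hPn : (0:ℝ) < ∏ l ∈ Finset.Icc i (i+j), (n l:ℝ) :=
      Finset.prod_pos fun l hl => hnpos l (le_trans hi (Finset.mem_Icc.mp hl).1)
    have hQF : (0:ℝ) < ∏ l ∈ Finset.Icc 1 (i-1), ((n l:ℝ) + kF l) :=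
      Finset.prod_pos fun l hl => by
        have := hnpos l (Finset.mem_Icc.mp hl).1
        have := hkFpos l (Finset.mem_Icc.mp hl).1; linarith
    field_simp
  -- limits
  have hsub : Tendsto (fun j =>
      (∏ l ∈ Finset.Icc 1 (i+j), ((n l:ℝ) + kE l)) /
        ∏ l ∈ Finset.Icc 1 (i+j), ((n l:ℝ) + kF l)) atTop (nhds 1) := by
    have h := hratio.comp (tendsto_add_atTop_nat i)
    have key : ∀ j : ℕ, j + i = i + j := fun j => Nat.add_comm j i
    simpa only [Function.comp_def, key] using h
  have hlim := hsub.mul ((htE i).div (htF i) hFpos.ne')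
  simp only [Pi.div_apply] at hlim
  rw [funext hpw] at hlim
  have := tendsto_nhds_unique tendsto_const_nhds hlim
  rw [this, one_mul]

/-- One half of the conclusion, proved once and used twice by symmetry. -/
private lemma vsc_aux (n kE kF : ℕ → ℕ)
    (hn : ∀ i, 1 ≤ i → 0 < n i) (hkE : ∀ i, 1 ≤ i → 0 < kE i) (hkF : ∀ i, 1 ≤ i → 0 < kF i)
    (tE tF : ℕ → ℝ)
    (htE : ∀ i, Tendsto (fun j => ∏ l ∈ Finset.Icc i (i + j), (n l : ℝ) / ((n l : ℝ) + kE l))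
      atTop (nhds (tE i)))
    (htF : ∀ i, Tendsto (fun j => ∏ l ∈ Finset.Icc i (i + j), (n l : ℝ) / ((n l : ℝ) + kF l))
      atTop (nhds (tF i)))
    (htE1 : Tendsto tE atTop (nhds 1)) (htF1 : Tendsto tF atTop (nhds 1))
    (hdivEF : ∀ i, ∃ j, (∏ l ∈ Finset.Icc 1 i, (n l + kE l)) ∣
      ∏ l ∈ Finset.Icc 1 j, (n l + kF l))
    (hratio : Tendsto (fun i =>
        (∏ l ∈ Finset.Icc 1 i, ((n l : ℝ) + kE l)) / ∏ l ∈ Finset.Icc 1 i, ((n l : ℝ) + kF l))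
      atTop (nhds 1))
    (δ : ℝ) (hδ : 0 < δ) (N : ℕ) :
    ∃ i' i : ℕ, N ≤ i' ∧ i' < i ∧ 1 - tE i' < δ ∧
      ((∏ l ∈ Finset.Icc 1 (i' - 1), (n l + kE l)) ∣
        ∏ l ∈ Finset.Icc 1 (i - 1), (n l + kF l)) ∧
      1 < ((∏ l ∈ Finset.Icc 1 (i' - 1), ((n l : ℝ) + kF l)) /
            ∏ l ∈ Finset.Icc 1 (i' - 1), ((n l : ℝ) + kE l)) *
          ((∏ l ∈ Finset.Icc i' (i - 1), ((n l : ℝ) + kF l)) /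
            ∏ l ∈ Finset.Icc i' (i - 1), (n l : ℝ)) := by
  -- choose i'
  obtain ⟨i', hδ', hige⟩ : ∃ i', 1 - δ < tE i' ∧ max N 1 ≤ i' :=
    ((htE1.eventually (eventually_gt_nhds (show 1 - δ < 1 by linarith))).and
      (eventually_ge_atTop (max N 1))).exists
  have hi1 : 1 ≤ i' := le_trans (le_max_right N 1) hige
  have hiN : N ≤ i' := le_trans (le_max_left N 1) hige
  obtain ⟨hEpos, hElt⟩ := vsc_tpos n kE hn hkE tE htE htE1 i' hi1
  obtain ⟨hFpos, hFlt⟩ := vsc_tpos n kF hn hkF tF htF htF1 i' hi1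
  have hC := vsc_ratio_eq n kE kF hn hkE hkF tE tF htE htF hratio i' hi1 hFpos
  have hQE : (0:ℝ) < ∏ l ∈ Finset.Icc 1 (i'-1), ((n l:ℝ) + kE l) :=
    Finset.prod_pos fun l hl => by
      have h1 : (0:ℝ) < n l := by exact_mod_cast hn l (Finset.mem_Icc.mp hl).1
      have h2 : (0:ℝ) < kE l := by exact_mod_cast hkE l (Finset.mem_Icc.mp hl).1
      linarith
  have hQF : (0:ℝ) < ∏ l ∈ Finset.Icc 1 (i'-1), ((n l:ℝ) + kF l) :=
    Finset.prod_pos fun l hl => by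
      have h1 : (0:ℝ) < n l := by exact_mod_cast hn l (Finset.mem_Icc.mp hl).1
      have h2 : (0:ℝ) < kF l := by exact_mod_cast hkF l (Finset.mem_Icc.mp hl).1
      linarith
  have hC' : (∏ l ∈ Finset.Icc 1 (i'-1), ((n l:ℝ) + kF l)) /
      (∏ l ∈ Finset.Icc 1 (i'-1), ((n l:ℝ) + kE l)) = tF i' / tE i' := by
    rw [div_eq_div_iff hQF.ne' hFpos.ne'] at hC
    rw [div_eq_div_iff hQE.ne' hEpos.ne']
    linear_combination -hC
  -- limit of the target quantity
  have hinv : ∀ j : ℕ, (∏ l ∈ Finset.Icc i' (i'+j), ((n l:ℝ) + kF l)) /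
      (∏ l ∈ Finset.Icc i' (i'+j), (n l:ℝ))
      = (∏ l ∈ Finset.Icc i' (i'+j), (n l:ℝ)/((n l:ℝ) + kF l))⁻¹ := by
    intro j
    rw [Finset.prod_div_distrib, inv_div]
  have hL : Tendsto (fun j => ((∏ l ∈ Finset.Icc 1 (i'-1), ((n l:ℝ) + kF l)) /
        ∏ l ∈ Finset.Icc 1 (i'-1), ((n l:ℝ) + kE l)) *
      ((∏ l ∈ Finset.Icc i' (i'+j), ((n l:ℝ) + kF l)) /
        ∏ l ∈ Finset.Icc i' (i'+j), (n l:ℝ))) atTop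
      (nhds (((∏ l ∈ Finset.Icc 1 (i'-1), ((n l:ℝ) + kF l)) /
        ∏ l ∈ Finset.Icc 1 (i'-1), ((n l:ℝ) + kE l)) * (tF i')⁻¹)) := by
    simp only [hinv]
    exact ((htF i').inv₀ hFpos.ne').const_mul _
  have hlim1 : 1 < ((∏ l ∈ Finset.Icc 1 (i'-1), ((n l:ℝ) + kF l)) /
      ∏ l ∈ Finset.Icc 1 (i'-1), ((n l:ℝ) + kE l)) * (tF i')⁻¹ := by
    rw [hC', div_mul_eq_mul_div, mul_inv_cancel₀ hFpos.ne', lt_div_iff₀ hEpos, one_mul]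
    exact hElt
  obtain ⟨j₀, hj₀⟩ := hdivEF (i' - 1)
  obtain ⟨j, hjgt, hjge⟩ : ∃ j, 1 < ((∏ l ∈ Finset.Icc 1 (i'-1), ((n l:ℝ) + kF l)) /
        ∏ l ∈ Finset.Icc 1 (i'-1), ((n l:ℝ) + kE l)) *
      ((∏ l ∈ Finset.Icc i' (i'+j), ((n l:ℝ) + kF l)) /
        ∏ l ∈ Finset.Icc i' (i'+j), (n l:ℝ)) ∧ j₀ ≤ i' + j :=
    ((hL.eventually (eventually_gt_nhds hlim1)).and
      ((eventually_ge_atTop j₀).mono fun j hj => le_trans hj (Nat.le_add_left j i'))).exists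
  refine ⟨i', i' + j + 1, hiN, by omega, by linarith, ?_, ?_⟩
  · have hidx : i' + j + 1 - 1 = i' + j := by omega
    rw [hidx]
    exact dvd_trans hj₀ (Finset.prod_dvd_prod_of_subset _ _ _
      (Finset.Icc_subset_Icc_right hjge))
  · have hidx : i' + j + 1 - 1 = i' + j := by omega
    rw [hidx]
    exact hjgt

/-- Lemma 4.5, `auto-close`, of the paper. Under the standing growth
condition, equality as supernatural numbers, and ratio convergence, the sequences
`(k^E_i)` and `(k^F_i)` are "sufficiently close" in the sense of Definition 4.4. -/
theorem villadsen_sufficiently_close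
    (n kE kF : ℕ → ℕ)
    (hn : ∀ i, 1 ≤ i → 0 < n i) (hkE : ∀ i, 1 ≤ i → 0 < kE i) (hkF : ∀ i, 1 ≤ i → 0 < kF i)
    (tE tF : ℕ → ℝ)
    (htE : ∀ i, Tendsto (fun j => ∏ l ∈ Finset.Icc i (i + j), (n l : ℝ) / ((n l : ℝ) + kE l))
      atTop (nhds (tE i)))
    (htF : ∀ i, Tendsto (fun j => ∏ l ∈ Finset.Icc i (i + j), (n l : ℝ) / ((n l : ℝ) + kF l))
      atTop (nhds (tF i)))
    (htE1 : Tendsto tE atTop (nhds 1)) (htF1 : Tendsto tF atTop (nhds 1))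
    (hdivEF : ∀ i, ∃ j, (∏ l ∈ Finset.Icc 1 i, (n l + kE l)) ∣
      ∏ l ∈ Finset.Icc 1 j, (n l + kF l))
    (hdivFE : ∀ i, ∃ j, (∏ l ∈ Finset.Icc 1 i, (n l + kF l)) ∣
      ∏ l ∈ Finset.Icc 1 j, (n l + kE l))
    (hratio : Tendsto (fun i =>
        (∏ l ∈ Finset.Icc 1 i, ((n l : ℝ) + kE l)) / ∏ l ∈ Finset.Icc 1 i, ((n l : ℝ) + kF l))
      atTop (nhds 1))
    (δ : ℝ) (hδ : 0 < δ) (N : ℕ) :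
    (∃ i₁' i₁ : ℕ, N ≤ i₁' ∧ i₁' < i₁ ∧ 1 - tE i₁' < δ ∧
      ((∏ l ∈ Finset.Icc 1 (i₁' - 1), (n l + kE l)) ∣
        ∏ l ∈ Finset.Icc 1 (i₁ - 1), (n l + kF l)) ∧
      1 < ((∏ l ∈ Finset.Icc 1 (i₁' - 1), ((n l : ℝ) + kF l)) /
            ∏ l ∈ Finset.Icc 1 (i₁' - 1), ((n l : ℝ) + kE l)) *
          ((∏ l ∈ Finset.Icc i₁' (i₁ - 1), ((n l : ℝ) + kF l)) /
            ∏ l ∈ Finset.Icc i₁' (i₁ - 1), (n l : ℝ))) ∧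
    (∃ i₂' i₂ : ℕ, N ≤ i₂' ∧ i₂' < i₂ ∧ 1 - tF i₂' < δ ∧
      ((∏ l ∈ Finset.Icc 1 (i₂' - 1), (n l + kF l)) ∣
        ∏ l ∈ Finset.Icc 1 (i₂ - 1), (n l + kE l)) ∧
      1 < ((∏ l ∈ Finset.Icc 1 (i₂' - 1), ((n l : ℝ) + kE l)) /
            ∏ l ∈ Finset.Icc 1 (i₂' - 1), ((n l : ℝ) + kF l)) *
          ((∏ l ∈ Finset.Icc i₂' (i₂ - 1), ((n l : ℝ) + kE l)) /
            ∏ l ∈ Finset.Icc i₂' (i₂ - 1), (n l : ℝ))) := by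
  have hratio' : Tendsto (fun i =>
      (∏ l ∈ Finset.Icc 1 i, ((n l : ℝ) + kF l)) / ∏ l ∈ Finset.Icc 1 i, ((n l : ℝ) + kE l))
      atTop (nhds 1) := by
    simpa only [inv_div, inv_one] using hratio.inv₀ one_ne_zero
  exact ⟨vsc_aux n kE kF hn hkE hkF tE tF htE htF htE1 htF1 hdivEF hratio δ hδ N,
    vsc_aux n kF kE hn hkF hkE tF tE htF htE htF1 htE1 hdivFE hratio' δ hδ N⟩
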